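/- Let N(x) = x^{q^2+q+1} be the norm from F_{q^3} to F_q. For k, a ∈ F_{q^3} with N(k) = N(a) = 1, define the F_q-subspaces S_k = {(x, kx) : x ∈ F_{q^3}} and C_a = {(x, a·x^{q^2}) : x ∈ F_{q^3}} of F_{q^3} × F_{q^3}. Then: (i) for all such k, a, the intersection C_a ∩ S_k is an F_q-subspace of dimension exactly 1; (ii) for a ≠ a' with N(a) = N(a') = 1, C_a ∩ C_{a'} = {0}. -/

import Mathlib

-- step: z^{q^2}=z → z^q = z
lemma aux_step {F : Type*} [Field F] [Fintype F] {q : ℕ} (hF : Fintype.card F = q ^ 3)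
    {z : F} (hz : z ^ q ^ 2 = z) : z ^ q = z := by
  have h3 : z ^ q ^ 3 = z := by rw [← hF]; exact FiniteField.pow_card z
  have h4 : z ^ q ^ 4 = z := by
    have : z ^ q ^ 4 = (z ^ q ^ 2) ^ q ^ 2 := by rw [← pow_mul, ← pow_add]
    rw [this, hz, hz]
  have h4' : z ^ q ^ 4 = z ^ q := by
    have : z ^ q ^ 4 = (z ^ q ^ 3) ^ q := by rw [← pow_mul, ← pow_succ]
    rw [this, h3]
  rw [← h4', h4]

-- fixed field
lemma aux_fix {q : ℕ} (hq2 : 2 ≤ q) (K F : Type*) [Field K] [Field F] [Algebra K F]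
    [Fintype K] [Fintype F] (hK : Fintype.card K = q)
    {z : F} (hz : z ^ q = z) : ∃ c : K, algebraMap K F c = z := by
  classical
  set S : Finset F := Finset.univ.filter (fun x => x ^ q = x) with hS
  set A : Finset F := Finset.univ.image (algebraMap K F) with hA
  have hAS : A ⊆ S := by
    intro x hx
    simp only [hA, Finset.mem_image] at hx
    obtain ⟨c, -, rfl⟩ := hx
    have : c ^ q = c := by rw [← hK]; exact FiniteField.pow_card c
    simp only [hS, Finset.mem_filter, Finset.mem_univ, true_and, ← map_pow, this]
  have hcardA : A.card = q := by
    rw [hA, Finset.card_image_of_injective _ (algebraMap K F).injective, Finset.card_univ, hK]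
  have hcardS : S.card ≤ q := by
    have hne : (Polynomial.X ^ q - Polynomial.X : Polynomial F) ≠ 0 :=
      FiniteField.X_pow_card_sub_X_ne_zero F hq2
    have hsub : S ⊆ (Polynomial.X ^ q - Polynomial.X : Polynomial F).roots.toFinset := by
      intro x hx
      simp only [hS, Finset.mem_filter, Finset.mem_univ, true_and] at hx
      rw [Multiset.mem_toFinset, Polynomial.mem_roots hne]
      simp [Polynomial.IsRoot, sub_eq_zero, hx]
    calc S.card ≤ _ := Finset.card_le_card hsub
      _ ≤ Multiset.card (Polynomial.X ^ q - Polynomial.X : Polynomial F).roots :=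
        Multiset.toFinset_card_le _
      _ ≤ _ := by
        have := (Polynomial.X ^ q - Polynomial.X : Polynomial F).card_roots'
        rwa [FiniteField.X_pow_card_sub_X_natDegree_eq F hq2] at this
  have : S = A := (Finset.eq_of_subset_of_card_le hAS (hcardA ▸ hcardS)).symm
  have hzS : z ∈ S := by simp [hS, hz]
  rw [this, hA] at hzS
  simpa using (Finset.mem_image.mp hzS).imp (fun c h => h.2)


lemma aux_nat (q : ℕ) (hq2 : 2 ≤ q) :
    (q - 1) * (q ^ 2 + q + 1) = q ^ 3 - 1 ∧ (q ^ 2 - 1) * (q ^ 2 + q + 1) = (q ^ 3 - 1) * (q + 1) := by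
  obtain ⟨r, rfl⟩ : ∃ r, q = r + 2 := ⟨q - 2, by omega⟩
  have e2 : (r + 2) ^ 2 = r ^ 2 + 4 * r + 4 := by ring
  have e3 : (r + 2) ^ 3 = r ^ 3 + 6 * r ^ 2 + 12 * r + 8 := by ring
  constructor
  · have h : (r + 2) - 1 = r + 1 := by omega
    rw [h, e2, e3]
    have key : (r + 1) * (r ^ 2 + 4 * r + 4 + (r + 2) + 1) + 1 = r ^ 3 + 6 * r ^ 2 + 12 * r + 8 := by
      ring
    omega
  · rw [e2, e3]
    have h1 : (r ^ 2 + 4 * r + 4) - 1 = r ^ 2 + 4 * r + 3 := by omega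
    have h2 : (r ^ 3 + 6 * r ^ 2 + 12 * r + 8) - 1 = r ^ 3 + 6 * r ^ 2 + 12 * r + 7 := by omega
    rw [h1, h2]; ring

-- count of n-th roots of unity among units is ≤ n
lemma aux_count (F : Type*) [Field F] [Fintype F] [DecidableEq F] (n : ℕ) (hn : 0 < n) :
    (Finset.univ.filter (fun u : Fˣ => u ^ n = 1)).card ≤ n := by
  classical
  have := card_nthRoots_subgroup_units (Units.coeHom F) (fun _ _ h => Units.ext h) hn 1
  simp only [Units.coeHom_apply, Units.val_one] at this
  calc (Finset.univ.filter (fun u : Fˣ => u ^ n = 1)).card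
      ≤ Multiset.card (Polynomial.nthRoots n (1 : F)) := by
        convert this using 2
    _ ≤ n := Polynomial.card_nthRoots n 1

lemma aux_surj {q : ℕ} (hq2 : 2 ≤ q) (F : Type*) [Field F] [Fintype F]
    (hF : Fintype.card F = q ^ 3)
    (hstep : ∀ z : F, z ^ q ^ 2 = z → z ^ q = z)
    {u : Fˣ} (hu1 : u ^ (q ^ 2 + q + 1) = 1) : ∃ v : Fˣ, v ^ (q ^ 2 - 1) = u := by
  classical
  obtain ⟨e1, e2⟩ := aux_nat q hq2
  have hcardU : Fintype.card Fˣ = q ^ 3 - 1 := by rw [Fintype.card_units, hF]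
  set φ : Fˣ →* Fˣ := powMonoidHom (q ^ 2 - 1) with hφ
  -- kernel is contained in (q-1)-th roots of 1
  have hker : ∀ v : Fˣ, v ^ (q ^ 2 - 1) = 1 → v ^ (q - 1) = 1 := by
    intro v hv
    have h2 : (v : F) ^ q ^ 2 = v := by
      have : (v : F) ^ (q ^ 2 - 1) = 1 := by
        rw [← Units.val_pow_eq_pow_val, hv, Units.val_one]
      have h := congrArg (· * (v : F)) this
      simp only [one_mul] at h
      rw [← pow_succ] at h
      have hq21 : q ^ 2 - 1 + 1 = q ^ 2 := by have : 1 ≤ q ^ 2 := Nat.one_le_pow _ _ (by omega); omega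
      rwa [hq21] at h
    have hq : (v : F) ^ q = v := hstep _ h2
    have hvq : v ^ q = v := Units.ext (by rw [Units.val_pow_eq_pow_val]; exact hq)
    have : v ^ (q - 1) * v = 1 * v := by
      rw [← pow_succ, one_mul]
      have : q - 1 + 1 = q := by omega
      rw [this, hvq]
    exact mul_right_cancel this
  -- cardinality of the kernel
  have hkerle : Nat.card (MonoidHom.ker φ) ≤ q - 1 := by
    have hinj : Function.Injective
        (fun v : MonoidHom.ker φ => (⟨(v : Fˣ), by
          have hv := v.2
          simp only [MonoidHom.mem_ker, hφ, powMonoidHom_apply] at hv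
          exact hker _ hv⟩ : {u : Fˣ // u ^ (q - 1) = 1})) := by
      intro a b hab
      have h : (a : Fˣ) = (b : Fˣ) := congrArg (Subtype.val : {u : Fˣ // u ^ (q - 1) = 1} → Fˣ) hab
      exact Subtype.ext h
    calc Nat.card (MonoidHom.ker φ) ≤ Nat.card {u : Fˣ // u ^ (q - 1) = 1} :=
          Nat.card_le_card_of_injective _ hinj
      _ = (Finset.univ.filter (fun u : Fˣ => u ^ (q - 1) = 1)).card := by
          rw [Nat.card_eq_fintype_card, Fintype.card_subtype]
      _ ≤ q - 1 := aux_count F (q - 1) (by omega)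
  -- product formula
  have hprod : Nat.card (MonoidHom.range φ) * Nat.card (MonoidHom.ker φ) = q ^ 3 - 1 := by
    have h1 := Subgroup.card_eq_card_quotient_mul_card_subgroup (MonoidHom.ker φ)
    have h2 : Nat.card (Fˣ ⧸ MonoidHom.ker φ) = Nat.card (MonoidHom.range φ) :=
      Nat.card_congr (QuotientGroup.quotientKerEquivRange φ).toEquiv
    rw [h2] at h1
    rw [← h1, Nat.card_eq_fintype_card, hcardU]
  have hrangege : q ^ 2 + q + 1 ≤ Nat.card (MonoidHom.range φ) := by
    by_contra hlt
    push_neg at hlt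
    have hR : Nat.card (MonoidHom.range φ) ≤ q ^ 2 + q := by omega
    have : q ^ 3 - 1 ≤ (q ^ 2 + q) * (q - 1) :=
      hprod ▸ Nat.mul_le_mul hR hkerle
    rw [← e1] at this
    have h3 : 1 ≤ q - 1 := by omega
    nlinarith [this, h3]
  -- range is contained in the (q^2+q+1)-th roots of unity
  have hrangeT : ∀ w : Fˣ, w ∈ MonoidHom.range φ → w ^ (q ^ 2 + q + 1) = 1 := by
    rintro w ⟨v, rfl⟩
    simp only [hφ, powMonoidHom_apply]
    rw [← pow_mul, e2, pow_mul, ← hcardU, pow_card_eq_one, one_pow]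
  classical
  set T : Finset Fˣ := Finset.univ.filter (fun w : Fˣ => w ^ (q ^ 2 + q + 1) = 1) with hT
  set R : Finset Fˣ := (MonoidHom.range φ : Set Fˣ).toFinset with hR
  have hRT : R ⊆ T := by
    intro w hw
    rw [hR, Set.mem_toFinset] at hw
    simp only [hT, Finset.mem_filter, Finset.mem_univ, true_and]
    exact hrangeT w hw
  have hcardR : R.card = Nat.card (MonoidHom.range φ) := by
    rw [hR, Set.toFinset_card]
    exact Nat.card_eq_fintype_card.symm
  have hTcard : T.card ≤ q ^ 2 + q + 1 := aux_count F _ (by positivity)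
  have hTR : T = R := (Finset.eq_of_subset_of_card_le hRT (by omega)).symm
  have huT : u ∈ T := by simp [hT, hu1]
  rw [hTR, hR, Set.mem_toFinset] at huT
  obtain ⟨v, hv⟩ := huT
  exact ⟨v, by simpa [hφ, powMonoidHom_apply] using hv⟩

theorem stmt_16 (q : ℕ) (hq : IsPrimePow q) (K F : Type*) [Field K] [Field F]
    [Algebra K F] [Fintype K] [Fintype F]
    (hK : Fintype.card K = q) (hF : Fintype.card F = q ^ 3) :
    (∀ k a : F, k ^ (q ^ 2 + q + 1) = 1 → a ^ (q ^ 2 + q + 1) = 1 →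
      ∃ W : Submodule K (F × F),
        (W : Set (F × F)) =
          {p : F × F | ∃ x : F, p = (x, a * x ^ q ^ 2)} ∩ {p : F × F | ∃ x : F, p = (x, k * x)} ∧
        Module.finrank K W = 1) ∧
    (∀ a a' : F, a ^ (q ^ 2 + q + 1) = 1 → a' ^ (q ^ 2 + q + 1) = 1 → a ≠ a' →
      {p : F × F | ∃ x : F, p = (x, a * x ^ q ^ 2)} ∩
        {p : F × F | ∃ x : F, p = (x, a' * x ^ q ^ 2)} = {0}) := by
  classical
  have hq2 : 2 ≤ q := hq.two_le
  have hq20 : q ^ 2 ≠ 0 := by positivity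
  have hstep : ∀ z : F, z ^ q ^ 2 = z → z ^ q = z := fun z hz => aux_step hF hz
  -- characteristic / Frobenius additivity
  have hfrob : ∀ x y : F, (x + y) ^ q ^ 2 = x ^ q ^ 2 + y ^ q ^ 2 := by
    obtain ⟨p, s, hp, hs, rfl⟩ := hq
    have hp' : Nat.Prime p := hp.nat_prime
    haveI : Fact (Nat.Prime p) := ⟨hp'⟩
    haveI hrc : CharP F (ringChar F) := ringChar.charP F
    obtain ⟨n, hrcp, hcard⟩ := FiniteField.card F (ringChar F)
    have hrceq : ringChar F = p := by
      have h1 : ringChar F ∣ (p ^ s) ^ 3 := by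
        rw [← hF, hcard]
        exact dvd_pow_self _ n.ne_zero
      have h2 : ringChar F ∣ p := hrcp.dvd_of_dvd_pow (by rwa [← pow_mul] at h1)
      exact (Nat.prime_dvd_prime_iff_eq hrcp hp').mp h2
    haveI : CharP F p := hrceq ▸ hrc
    intro x y
    have hps : (p ^ s) ^ 2 = p ^ (s * 2) := by rw [← pow_mul]
    rw [hps]
    exact add_pow_char_pow x y p (s * 2)
  -- algebraMap elements are fixed by x ↦ x^(q^2)
  have halg : ∀ c : K, (algebraMap K F c) ^ q ^ 2 = algebraMap K F c := by
    intro c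
    have h1 : c ^ q = c := by rw [← hK]; exact FiniteField.pow_card c
    have : c ^ q ^ 2 = c := by rw [pow_two, pow_mul, h1, h1]
    rw [← map_pow, this]
  constructor
  · -- part (i)
    intro k a hk ha
    have hk0 : k ≠ 0 := by
      rintro rfl; rw [zero_pow (by positivity)] at hk; exact zero_ne_one hk
    have ha0 : a ≠ 0 := by
      rintro rfl; rw [zero_pow (by positivity)] at ha; exact zero_ne_one ha
    -- the nonzero solution x₀ of a * x^(q^2) = k * x
    have hu0 : k * a⁻¹ ≠ 0 := mul_ne_zero hk0 (inv_ne_zero ha0)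
    have hu1 : (Units.mk0 (k * a⁻¹) hu0) ^ (q ^ 2 + q + 1) = 1 := by
      rw [← Units.val_eq_one, Units.val_pow_eq_pow_val, Units.val_mk0]
      rw [mul_pow, inv_pow, hk, ha, inv_one, mul_one]
    obtain ⟨v, hv⟩ := aux_surj hq2 F hF hstep hu1
    set x₀ : F := (v : F) with hx₀
    have hx₀0 : x₀ ≠ 0 := v.ne_zero
    have hx₀pow : x₀ ^ (q ^ 2 - 1) = k * a⁻¹ := by
      have h := congrArg Units.val hv
      rw [Units.val_pow_eq_pow_val, Units.val_mk0] at h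
      exact h
    have hpowsplit : ∀ z : F, z ^ q ^ 2 = z ^ (q ^ 2 - 1) * z := by
      intro z
      rw [← pow_succ]
      congr 1
      omega
    have hx₀sol : a * x₀ ^ q ^ 2 = k * x₀ := by
      rw [hpowsplit, hx₀pow]
      field_simp
    -- the linear map f x = a * x^(q^2) - k * x
    set f : F →ₗ[K] F :=
      { toFun := fun x => a * x ^ q ^ 2 - k * x
        map_add' := by
          intro x y
          rw [hfrob]
          ring
        map_smul' := by
          intro c x
          dsimp only [RingHom.id_apply]
          rw [Algebra.smul_def, Algebra.smul_def, mul_pow, halg]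
          ring } with hf
    have hfapply : ∀ x : F, f x = a * x ^ q ^ 2 - k * x := fun _ => rfl
    set L : Submodule K F := LinearMap.ker f with hL
    have hx₀L : x₀ ∈ L := by
      rw [hL, LinearMap.mem_ker, hfapply, hx₀sol, sub_self]
    have hLspan : L = Submodule.span K {x₀} := by
      apply le_antisymm
      · intro y hy
        rw [hL, LinearMap.mem_ker, hfapply, sub_eq_zero] at hy
        by_cases hy0 : y = 0
        · simp [hy0]
        · set z : F := y * x₀⁻¹ with hz
          have hzfix : z ^ q ^ 2 = z := by
            rw [hz, mul_pow, inv_pow]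
            have h1 : y ^ q ^ 2 = a⁻¹ * k * y := by
              field_simp
              linear_combination hy
            have h2 : x₀ ^ q ^ 2 = a⁻¹ * k * x₀ := by
              field_simp
              linear_combination hx₀sol
            rw [h1, h2]
            have hak : a⁻¹ * k ≠ 0 := mul_ne_zero (inv_ne_zero ha0) hk0
            field_simp
          obtain ⟨c, hc⟩ := aux_fix hq2 K F hK (hstep z hzfix)
          rw [Submodule.mem_span_singleton]
          refine ⟨c, ?_⟩
          rw [Algebra.smul_def, hc, hz]
          field_simp
      · rw [Submodule.span_singleton_le_iff_mem]
        exact hx₀L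
    have hLrank : Module.finrank K L = 1 := by
      rw [hLspan]
      exact finrank_span_singleton hx₀0
    -- the embedding g x = (x, k * x)
    set g : F →ₗ[K] F × F :=
      { toFun := fun x => (x, k * x)
        map_add' := by
          intro x y
          simp [Prod.ext_iff, mul_add]
        map_smul' := by
          intro c x
          simp [Prod.ext_iff, mul_smul_comm] } with hg
    have hgapply : ∀ x : F, g x = (x, k * x) := fun _ => rfl
    have hginj : Function.Injective g := by
      intro x y hxy
      exact congrArg Prod.fst hxy
    refine ⟨L.map g, ?_, ?_⟩
    · ext p
      simp only [SetLike.mem_coe, Submodule.mem_map, Set.mem_inter_iff, Set.mem_setOf_eq]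
      constructor
      · rintro ⟨y, hyL, hyg⟩
        rw [hL, LinearMap.mem_ker, hfapply, sub_eq_zero] at hyL
        rw [hgapply] at hyg
        constructor
        · exact ⟨y, by rw [← hyg, hyL]⟩
        · exact ⟨y, hyg.symm⟩
      · rintro ⟨⟨x, rfl⟩, ⟨y, hy⟩⟩
        have h1 : x = y := congrArg Prod.fst hy
        have h2 : a * x ^ q ^ 2 = k * x := by
          have := congrArg Prod.snd hy
          dsimp at this
          rw [this, ← h1]
        refine ⟨x, ?_, ?_⟩
        · rw [hL, LinearMap.mem_ker, hfapply, h2, sub_self]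
        · rw [hgapply, h2]
    · have e := (Submodule.equivMapOfInjective g hginj L).finrank_eq
      rw [← e, hLrank]
  · -- part (ii)
    intro a a' ha ha' hne
    ext p
    simp only [Set.mem_inter_iff, Set.mem_setOf_eq, Set.mem_singleton_iff]
    constructor
    · rintro ⟨⟨x, rfl⟩, ⟨y, hy⟩⟩
      have h1 : x = y := congrArg Prod.fst hy
      have h2 : a * x ^ q ^ 2 = a' * x ^ q ^ 2 := by
        have h := congrArg Prod.snd hy
        dsimp at h
        rw [h, ← h1]
      have hx : x = 0 := by
        by_contra hx0
        exact hne (mul_right_cancel₀ (pow_ne_zero _ hx0) h2)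
      simp [hx, zero_pow hq20, Prod.ext_iff]
    · rintro rfl
      constructor
      · exact ⟨0, by rw [zero_pow hq20, mul_zero]; rfl⟩
      · exact ⟨0, by rw [zero_pow hq20, mul_zero]; rfl⟩
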